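/- Let {N_{k,∞}} be a firing rate sequence whose odd-indexed subsequence converges to N⁻ > 0 and whose even-indexed subsequence converges to N⁺ > 0 (so 1/I(N⁻) = N⁺ and 1/I(N⁺) = N⁻), and set p_{k,∞} := h(·, N_{k−1,∞}) for k ≥ 1. Then there exist constants C⁻, C⁺ > 0 (depending on N⁻, N⁺, b, V_R, V_F) and an index k₀ such that for all k ≥ k₀: sup_{v ≤ V_F} |p_{2k,∞}(v) − p_{2k−2,∞}(v)| ≤ C⁻ |N_{2k−1,∞} − N_{2k−3,∞}|, sup_{v ≤ V_F} |p_{2k+1,∞}(v) − p_{2k−1,∞}(v)| ≤ C⁺ |N_{2k,∞} − N_{2k−2,∞}|, sup_{v ≤ V_F} |p_{2k,∞}(v) − h(v,N⁻)| ≤ C⁻ |N_{2k−1,∞} − N⁻|, and sup_{v ≤ V_F} |p_{2k+1,∞}(v) − h(v,N⁺)| ≤ C⁺ |N_{2k,∞} − N⁺|; in particular the even-indexed pseudo-equilibria converge uniformly to the pseudo-equilibrium associated to N⁻ and the odd-indexed ones to the pseudo-equilibrium associated to N⁺. -/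

import Mathlib

open MeasureTheory Real Filter

/-- The function `I(N)` from the NNLIF model. -/
noncomputable def Ifun (b V_R V_F N : ℝ) : ℝ :=
  ∫ v in Set.Iic V_F,
    Real.exp (-(v - b * N) ^ 2 / 2) * ∫ w in (max v V_R)..V_F, Real.exp ((w - b * N) ^ 2 / 2)

/-- The pseudo-equilibrium `h(·,N)` associated to a firing rate `N`. -/
noncomputable def pseudoEq (b V_R V_F N v : ℝ) : ℝ :=
  (1 / Ifun b V_R V_F N) * Real.exp (-(v - b * N) ^ 2 / 2) *
    ∫ w in (max v V_R)..V_F, Real.exp ((w - b * N) ^ 2 / 2)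

noncomputable def Gprim (x : ℝ) : ℝ := ∫ u in (0:ℝ)..x, Real.exp (u ^ 2 / 2)

lemma contEsq : Continuous fun u : ℝ => Real.exp (u ^ 2 / 2) := by
  exact Real.continuous_exp.comp (by continuity)

lemma hasDerivAt_Gprim (x : ℝ) : HasDerivAt Gprim (Real.exp (x ^ 2 / 2)) x :=
  intervalIntegral.integral_hasDerivAt_right (contEsq.intervalIntegrable 0 x)
    (contEsq.stronglyMeasurable.stronglyMeasurableAtFilter) contEsq.continuousAt

lemma Gprim_mono : StrictMono Gprim :=
  strictMono_of_deriv_pos fun x => by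
    rw [(hasDerivAt_Gprim x).deriv]; positivity

lemma continuous_Gprim : Continuous Gprim :=
  continuous_iff_continuousAt.2 fun x => (hasDerivAt_Gprim x).continuousAt

lemma integral_shift (a c N' : ℝ) :
    (∫ w in a..c, Real.exp ((w - N') ^ 2 / 2)) = Gprim (c - N') - Gprim (a - N') := by
  have h1 : (∫ w in a..c, Real.exp ((w - N') ^ 2 / 2))
      = ∫ u in (a - N')..(c - N'), Real.exp (u ^ 2 / 2) :=
    intervalIntegral.integral_comp_sub_right (fun u => Real.exp (u ^ 2 / 2)) N'
  rw [h1, Gprim, Gprim]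
  rw [intervalIntegral.integral_interval_sub_left (contEsq.intervalIntegrable _ _)
    (contEsq.intervalIntegrable _ _)]


noncomputable def gaux (b V_R V_F N v : ℝ) : ℝ :=
  Real.exp (-(v - b * N) ^ 2 / 2) * (Gprim (V_F - b * N) - Gprim (max v V_R - b * N))

noncomputable def Daux (b V_R V_F N v : ℝ) : ℝ :=
  b * (v - b * N) * gaux b V_R V_F N v +
    Real.exp (-(v - b * N) ^ 2 / 2) *
      (b * Real.exp ((max v V_R - b * N) ^ 2 / 2) - b * Real.exp ((V_F - b * N) ^ 2 / 2))

lemma pseudoEq_eq (b V_R V_F N v : ℝ) :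
    pseudoEq b V_R V_F N v = (1 / Ifun b V_R V_F N) * gaux b V_R V_F N v := by
  rw [pseudoEq, gaux, integral_shift, mul_assoc]

lemma Ifun_eq (b V_R V_F N : ℝ) :
    Ifun b V_R V_F N = ∫ v in Set.Iic V_F, gaux b V_R V_F N v := by
  unfold Ifun gaux
  simp only [integral_shift]

lemma hasDerivAt_gaux (b V_R V_F v N : ℝ) :
    HasDerivAt (fun N => gaux b V_R V_F N v) (Daux b V_R V_F N v) N := by
  have h1 : HasDerivAt (fun N : ℝ => v - b * N) (-b) N := by
    simpa using ((hasDerivAt_id N).const_mul b).const_sub v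
  have h1' : HasDerivAt (fun N : ℝ => V_F - b * N) (-b) N := by
    simpa using ((hasDerivAt_id N).const_mul b).const_sub V_F
  have h1'' : HasDerivAt (fun N : ℝ => max v V_R - b * N) (-b) N := by
    simpa using ((hasDerivAt_id N).const_mul b).const_sub (max v V_R)
  have h2 : HasDerivAt (fun N : ℝ => -(v - b * N) ^ 2 / 2) (b * (v - b * N)) N := by
    have := ((h1.pow 2).neg).div_const 2
    exact this.congr_deriv (by norm_num; ring)
  have h3 := h2.exp
  have h4 : HasDerivAt (fun N : ℝ => Gprim (V_F - b * N))
      (Real.exp ((V_F - b * N) ^ 2 / 2) * (-b)) N :=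
    HasDerivAt.comp (h₂ := Gprim) N (hasDerivAt_Gprim (V_F - b * N)) h1'
  have h5 : HasDerivAt (fun N : ℝ => Gprim (max v V_R - b * N))
      (Real.exp ((max v V_R - b * N) ^ 2 / 2) * (-b)) N :=
    HasDerivAt.comp (h₂ := Gprim) N (hasDerivAt_Gprim (max v V_R - b * N)) h1''
  have h6 := h3.mul (h4.sub h5)
  refine HasDerivAt.congr_deriv (f := fun N => gaux b V_R V_F N v) h6 ?_
  unfold Daux gaux
  simp only [Pi.sub_apply]
  ring

lemma continuous_gaux (b V_R V_F N : ℝ) : Continuous fun v => gaux b V_R V_F N v := by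
  unfold gaux
  apply Continuous.mul
  · exact Real.continuous_exp.comp (by continuity)
  · exact Continuous.sub continuous_const (continuous_Gprim.comp (by continuity))

set_option maxHeartbeats 4000000 in
lemma master (b V_R V_F lo hi : ℝ) (hV : V_R < V_F) (hlh : lo ≤ hi) :
    ∃ C : ℝ, 0 < C ∧
      (∀ N ∈ Set.Icc lo hi, 0 < Ifun b V_R V_F N) ∧
      ContinuousOn (Ifun b V_R V_F) (Set.Icc lo hi) ∧
      (∀ N ∈ Set.Icc lo hi, ∀ N' ∈ Set.Icc lo hi, ∀ v : ℝ, v ≤ V_F →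
        |pseudoEq b V_R V_F N v - pseudoEq b V_R V_F N' v| ≤ C * |N - N'|) := by
  obtain ⟨B, hBdef⟩ : ∃ B : ℝ, B = |b| * (|lo| + |hi|) := ⟨_, rfl⟩
  have hB0 : 0 ≤ B := by rw [hBdef]; positivity
  have hbN : ∀ N ∈ Set.Icc lo hi, |b * N| ≤ B := by
    intro N hN
    rw [abs_mul, hBdef]
    apply mul_le_mul_of_nonneg_left _ (abs_nonneg b)
    rw [abs_le]
    exact ⟨by have := neg_abs_le lo; have := abs_nonneg hi; have := hN.1; linarith,
      by have := le_abs_self hi; have := abs_nonneg lo; have := hN.2; linarith⟩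
  obtain ⟨M, hMdef⟩ : ∃ M : ℝ, M = |V_R| + |V_F| := ⟨_, rfl⟩
  have hM0 : 0 ≤ M := by rw [hMdef]; positivity
  have hmemM : ∀ x : ℝ, V_R ≤ x → x ≤ V_F → -M ≤ x ∧ x ≤ M := by
    intro x h1 h2
    rw [hMdef]
    exact ⟨by have := neg_abs_le V_R; have := abs_nonneg V_F; linarith,
      by have := le_abs_self V_F; have := abs_nonneg V_R; linarith⟩
  obtain ⟨R, hRdef⟩ : ∃ R : ℝ, R = M + B := ⟨_, rfl⟩
  have hR0 : 0 ≤ R := by rw [hRdef]; linarith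
  have hsqR : ∀ N ∈ Set.Icc lo hi, ∀ x : ℝ, -M ≤ x → x ≤ M → (x - b * N) ^ 2 ≤ R ^ 2 := by
    intro N hN x hx1 hx2
    have hbn := hbN N hN
    rw [abs_le] at hbn
    rw [hRdef]
    nlinarith [hbn.1, hbn.2,
      mul_nonneg (by linarith : (0:ℝ) ≤ M - x) (by linarith : (0:ℝ) ≤ B - b * N),
      mul_nonneg (by linarith : (0:ℝ) ≤ M - x) (by linarith : (0:ℝ) ≤ B + b * N),
      mul_nonneg (by linarith : (0:ℝ) ≤ M + x) (by linarith : (0:ℝ) ≤ B - b * N),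
      mul_nonneg (by linarith : (0:ℝ) ≤ M + x) (by linarith : (0:ℝ) ≤ B + b * N)]
  obtain ⟨C1, hC1def⟩ : ∃ c : ℝ, c = (V_F - V_R) * Real.exp (R ^ 2 / 2) := ⟨_, rfl⟩
  have hC1pos : 0 < C1 := by rw [hC1def]; exact mul_pos (sub_pos.2 hV) (Real.exp_pos _)
  -- bracket bound
  have hbr : ∀ N ∈ Set.Icc lo hi, Gprim (V_F - b * N) - Gprim (V_R - b * N) ≤ C1 := by
    intro N hN
    rw [← integral_shift V_R V_F (b * N), hC1def]
    have h1 : ∀ x ∈ Set.Icc V_R V_F, Real.exp ((x - b * N) ^ 2 / 2) ≤ Real.exp (R ^ 2 / 2) := by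
      intro x hx
      apply Real.exp_le_exp.2
      have h2 := hmemM x hx.1 hx.2
      have h3 := hsqR N hN x h2.1 h2.2
      linarith
    calc (∫ w in V_R..V_F, Real.exp ((w - b * N) ^ 2 / 2))
        ≤ ∫ _ in V_R..V_F, Real.exp (R ^ 2 / 2) := by
          apply intervalIntegral.integral_mono_on hV.le
            ((Real.continuous_exp.comp (by continuity)).intervalIntegrable _ _)
            intervalIntegrable_const h1
      _ = (V_F - V_R) * Real.exp (R ^ 2 / 2) := by
          rw [intervalIntegral.integral_const, smul_eq_mul]
  have hbrkt : ∀ N ∈ Set.Icc lo hi, ∀ v : ℝ, v ≤ V_F →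
      0 ≤ Gprim (V_F - b * N) - Gprim (max v V_R - b * N) ∧
      Gprim (V_F - b * N) - Gprim (max v V_R - b * N) ≤ C1 := by
    intro N hN v hv
    have hm2 : max v V_R ≤ V_F := max_le hv hV.le
    have h1 : Gprim (max v V_R - b * N) ≤ Gprim (V_F - b * N) :=
      Gprim_mono.monotone (by linarith)
    have h2 : Gprim (V_R - b * N) ≤ Gprim (max v V_R - b * N) :=
      Gprim_mono.monotone (by have := le_max_right v V_R; linarith)
    exact ⟨by linarith, by have := hbr N hN; linarith⟩
  -- g bounds
  have hg0 : ∀ N ∈ Set.Icc lo hi, ∀ v : ℝ, v ≤ V_F →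
      0 ≤ gaux b V_R V_F N v ∧ gaux b V_R V_F N v ≤ C1 := by
    intro N hN v hv
    have hb := hbrkt N hN v hv
    have he1 : Real.exp (-(v - b * N) ^ 2 / 2) ≤ 1 := by
      rw [Real.exp_le_one_iff]
      nlinarith [sq_nonneg (v - b * N)]
    have he0 : (0:ℝ) < Real.exp (-(v - b * N) ^ 2 / 2) := Real.exp_pos _
    refine ⟨mul_nonneg he0.le hb.1, ?_⟩
    calc gaux b V_R V_F N v ≤ 1 * C1 := mul_le_mul he1 hb.2 hb.1 zero_le_one
      _ = C1 := one_mul _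
  -- exp bound by eB
  have hexpB : ∀ N ∈ Set.Icc lo hi, ∀ v : ℝ,
      Real.exp (-(v - b * N) ^ 2 / 2) ≤ Real.exp (B * |v| - v ^ 2 / 2) := by
    intro N hN v
    apply Real.exp_le_exp.2
    have h1 : v * (b * N) ≤ |v| * B := by
      calc v * (b * N) ≤ |v * (b * N)| := le_abs_self _
        _ = |v| * |b * N| := abs_mul _ _
        _ ≤ |v| * B := mul_le_mul_of_nonneg_left (hbN N hN) (abs_nonneg v)
    nlinarith [sq_nonneg (b * N)]
  -- the Daux pointwise bound
  obtain ⟨c₂, hc2def, hc₂0⟩ : ∃ c, c = |b| * C1 ∧ 0 ≤ c :=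
    ⟨_, rfl, mul_nonneg (abs_nonneg b) hC1pos.le⟩
  have hc₃0' : (0:ℝ) ≤ |b| * C1 * B + 2 * |b| * Real.exp (R ^ 2 / 2) := by positivity
  obtain ⟨c₃, hc3def, hc₃0⟩ : ∃ c, c = |b| * C1 * B + 2 * |b| * Real.exp (R ^ 2 / 2) ∧ 0 ≤ c :=
    ⟨_, rfl, hc₃0'⟩
  obtain ⟨φ, hφdef⟩ : ∃ f : ℝ → ℝ, f = fun v : ℝ => (c₂ * |v| + c₃) * Real.exp (B * |v| - v ^ 2 / 2) := ⟨_, rfl⟩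
  have hφ0 : ∀ v, 0 ≤ φ v := by
    intro v
    rw [hφdef]
    apply mul_nonneg _ (Real.exp_pos _).le
    have := abs_nonneg v
    nlinarith
  have hφcont : Continuous φ := by
    rw [hφdef]
    apply Continuous.mul
    · exact ((continuous_const.mul continuous_abs).add continuous_const)
    · exact Real.continuous_exp.comp
        ((continuous_const.mul continuous_abs).sub ((continuous_pow 2).div_const 2))
  have hDphi : ∀ N ∈ Set.Icc lo hi, ∀ v : ℝ, v ≤ V_F → |Daux b V_R V_F N v| ≤ φ v := by
    intro N hN v hv
    have hb := hbrkt N hN v hv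
    have hgb := hg0 N hN v hv
    have he0 : (0:ℝ) < Real.exp (-(v - b * N) ^ 2 / 2) := Real.exp_pos _
    have heB : (0:ℝ) < Real.exp (B * |v| - v ^ 2 / 2) := Real.exp_pos _
    have hx : |v - b * N| ≤ |v| + B := by
      have h := abs_add_le v (-(b * N))
      rw [abs_neg, ← sub_eq_add_neg] at h
      have := hbN N hN
      linarith
    have hef : Real.exp (-(v - b * N) ^ 2 / 2) * Real.exp ((V_F - b * N) ^ 2 / 2)
        ≤ Real.exp (B * |v| - v ^ 2 / 2) * Real.exp (R ^ 2 / 2) := by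
      apply mul_le_mul (hexpB N hN v) _ (Real.exp_pos _).le heB.le
      apply Real.exp_le_exp.2
      have hmm := hmemM V_F (le_of_lt hV) le_rfl
      have := hsqR N hN V_F hmm.1 hmm.2
      linarith
    have hem : Real.exp (-(v - b * N) ^ 2 / 2) * Real.exp ((max v V_R - b * N) ^ 2 / 2)
        ≤ Real.exp (B * |v| - v ^ 2 / 2) * Real.exp (R ^ 2 / 2) := by
      rcases le_or_gt v V_R with h | h
      · rw [max_eq_right h]
        apply mul_le_mul (hexpB N hN v) _ (Real.exp_pos _).le heB.le
        apply Real.exp_le_exp.2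
        have hmm := hmemM V_R le_rfl hV.le
        have := hsqR N hN V_R hmm.1 hmm.2
        linarith
      · rw [max_eq_left h.le, ← Real.exp_add, ← Real.exp_add]
        have h1 : -(v - b * N) ^ 2 / 2 + (v - b * N) ^ 2 / 2 = 0 := by ring
        rw [h1, Real.exp_zero]
        apply Real.one_le_exp
        have hmm := hmemM v h.le hv
        have hv2 : v ^ 2 ≤ M ^ 2 := by nlinarith [hmm.1, hmm.2]
        have hMR : M ^ 2 ≤ R ^ 2 := by rw [hRdef]; nlinarith [mul_nonneg hM0 hB0, sq_nonneg B]
        nlinarith [mul_nonneg hB0 (abs_nonneg v)]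
    have key1 : |b * (v - b * N) * gaux b V_R V_F N v|
        ≤ |b| * ((|v| + B) * (Real.exp (B * |v| - v ^ 2 / 2) * C1)) := by
      rw [abs_mul, abs_mul, mul_assoc]
      apply mul_le_mul_of_nonneg_left _ (abs_nonneg b)
      apply mul_le_mul hx _ (abs_nonneg _) (by positivity)
      rw [abs_of_nonneg hgb.1]
      unfold gaux
      exact mul_le_mul (hexpB N hN v) hb.2 hb.1 heB.le
    have key2 : |Real.exp (-(v - b * N) ^ 2 / 2) *
        (b * Real.exp ((max v V_R - b * N) ^ 2 / 2) - b * Real.exp ((V_F - b * N) ^ 2 / 2))|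
        ≤ 2 * |b| * Real.exp (R ^ 2 / 2) * Real.exp (B * |v| - v ^ 2 / 2) := by
      rw [abs_mul, abs_of_pos he0]
      have h2 : |b * Real.exp ((max v V_R - b * N) ^ 2 / 2) -
          b * Real.exp ((V_F - b * N) ^ 2 / 2)|
          ≤ |b| * Real.exp ((max v V_R - b * N) ^ 2 / 2) +
            |b| * Real.exp ((V_F - b * N) ^ 2 / 2) := by
        refine (abs_sub _ _).trans ?_
        rw [abs_mul, abs_mul, abs_of_pos (Real.exp_pos _), abs_of_pos (Real.exp_pos _)]
      calc Real.exp (-(v - b * N) ^ 2 / 2) * |b * Real.exp ((max v V_R - b * N) ^ 2 / 2) -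
            b * Real.exp ((V_F - b * N) ^ 2 / 2)|
          ≤ Real.exp (-(v - b * N) ^ 2 / 2) * (|b| * Real.exp ((max v V_R - b * N) ^ 2 / 2) +
            |b| * Real.exp ((V_F - b * N) ^ 2 / 2)) := mul_le_mul_of_nonneg_left h2 he0.le
        _ = |b| * (Real.exp (-(v - b * N) ^ 2 / 2) * Real.exp ((max v V_R - b * N) ^ 2 / 2)) +
            |b| * (Real.exp (-(v - b * N) ^ 2 / 2) * Real.exp ((V_F - b * N) ^ 2 / 2)) := by
            ring
        _ ≤ |b| * (Real.exp (B * |v| - v ^ 2 / 2) * Real.exp (R ^ 2 / 2)) +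
            |b| * (Real.exp (B * |v| - v ^ 2 / 2) * Real.exp (R ^ 2 / 2)) :=
            add_le_add (mul_le_mul_of_nonneg_left hem (abs_nonneg b))
              (mul_le_mul_of_nonneg_left hef (abs_nonneg b))
        _ = 2 * |b| * Real.exp (R ^ 2 / 2) * Real.exp (B * |v| - v ^ 2 / 2) := by ring
    rw [hφdef]
    unfold Daux
    refine (abs_add_le _ _).trans (le_trans (add_le_add key1 key2) (le_of_eq ?_))
    rw [hc2def, hc3def]
    ring
  -- φ integrable
  have hCφ0' : (0:ℝ) ≤ 2 * (c₂ + c₃) * Real.exp ((B + 1) ^ 2) :=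
    mul_nonneg (by linarith) (Real.exp_pos _).le
  obtain ⟨Cφ, hCφdef, hCφ0⟩ : ∃ c, c = 2 * (c₂ + c₃) * Real.exp ((B + 1) ^ 2) ∧ 0 ≤ c :=
    ⟨_, rfl, hCφ0'⟩
  have hφCφ : ∀ v : ℝ, φ v ≤ Cφ * Real.exp (-(4:ℝ)⁻¹ * v ^ 2) := by
    intro v
    rw [hφdef]
    have h1 : c₂ * |v| + c₃ ≤ 2 * (c₂ + c₃) * Real.exp |v| := by
      nlinarith [abs_nonneg v, Real.exp_pos |v|,
        mul_nonneg hc₂0 (abs_nonneg v), mul_nonneg hc₃0 (abs_nonneg v),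
        mul_le_mul_of_nonneg_left (Real.add_one_le_exp |v|) (by linarith : (0:ℝ) ≤ c₂ + c₃)]
    have h2 : Real.exp |v| * Real.exp (B * |v| - v ^ 2 / 2)
        ≤ Real.exp ((B + 1) ^ 2) * Real.exp (-(4:ℝ)⁻¹ * v ^ 2) := by
      rw [← Real.exp_add, ← Real.exp_add]
      apply Real.exp_le_exp.2
      nlinarith [sq_nonneg (|v| - 2 * (B + 1)), sq_abs v]
    calc (c₂ * |v| + c₃) * Real.exp (B * |v| - v ^ 2 / 2) ≤ (2 * (c₂ + c₃) * Real.exp |v|) * Real.exp (B * |v| - v ^ 2 / 2) :=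
          mul_le_mul_of_nonneg_right h1 (Real.exp_pos _).le
      _ = 2 * (c₂ + c₃) * (Real.exp |v| * Real.exp (B * |v| - v ^ 2 / 2)) := by ring
      _ ≤ 2 * (c₂ + c₃) * (Real.exp ((B + 1) ^ 2) * Real.exp (-(4:ℝ)⁻¹ * v ^ 2)) :=
          mul_le_mul_of_nonneg_left h2 (by linarith)
      _ = Cφ * Real.exp (-(4:ℝ)⁻¹ * v ^ 2) := by rw [hCφdef]; ring
  have hφint : IntegrableOn φ (Set.Iic V_F) volume := by
    apply MeasureTheory.Integrable.integrableOn
    apply MeasureTheory.Integrable.mono'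
      ((integrable_exp_neg_mul_sq (by norm_num : (0:ℝ) < 4⁻¹)).const_mul Cφ)
      hφcont.aestronglyMeasurable
    apply ae_of_all
    intro v
    rw [Real.norm_eq_abs, abs_of_nonneg (hφ0 v)]
    exact hφCφ v
  -- gaux integrable
  have hgint : ∀ N ∈ Set.Icc lo hi, IntegrableOn (fun v => gaux b V_R V_F N v) (Set.Iic V_F) volume := by
    intro N hN
    apply MeasureTheory.Integrable.mono'
      ((((integrable_exp_neg_mul_sq (by norm_num : (0:ℝ) < 4⁻¹)).const_mul
        (C1 * Real.exp (B ^ 2))).restrict (s := Set.Iic V_F)))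
      ((continuous_gaux b V_R V_F N).aestronglyMeasurable.restrict)
    rw [ae_restrict_iff' measurableSet_Iic]
    apply ae_of_all
    intro v hv
    rw [Set.mem_Iic] at hv
    have hgb := hg0 N hN v hv
    rw [Real.norm_eq_abs, abs_of_nonneg hgb.1]
    have h1 : gaux b V_R V_F N v ≤ Real.exp (B * |v| - v ^ 2 / 2) * C1 := by
      unfold gaux
      exact mul_le_mul (hexpB N hN v) (hbrkt N hN v hv).2 (hbrkt N hN v hv).1 (Real.exp_pos _).le
    have h2 : Real.exp (B * |v| - v ^ 2 / 2)
        ≤ Real.exp (B ^ 2) * Real.exp (-(4:ℝ)⁻¹ * v ^ 2) := by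
      rw [← Real.exp_add]
      apply Real.exp_le_exp.2
      nlinarith [sq_nonneg (|v| - 2 * B), sq_abs v]
    calc gaux b V_R V_F N v ≤ Real.exp (B * |v| - v ^ 2 / 2) * C1 := h1
      _ ≤ (Real.exp (B ^ 2) * Real.exp (-(4:ℝ)⁻¹ * v ^ 2)) * C1 :=
          mul_le_mul_of_nonneg_right h2 hC1pos.le
      _ = C1 * Real.exp (B ^ 2) * Real.exp (-(4:ℝ)⁻¹ * v ^ 2) := by ring
  -- positivity of Ifun
  have hIpos : ∀ N ∈ Set.Icc lo hi, 0 < Ifun b V_R V_F N := by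
    intro N hN
    rw [Ifun_eq]
    have h1 : (0:ℝ) < ∫ v in V_R..V_F, gaux b V_R V_F N v := by
      apply intervalIntegral.intervalIntegral_pos_of_pos_on
        ((continuous_gaux b V_R V_F N).intervalIntegrable _ _) _ hV
      intro x hx
      unfold gaux
      apply mul_pos (Real.exp_pos _)
      rw [max_eq_left hx.1.le]
      exact sub_pos.2 (Gprim_mono (by linarith [hx.2]))
    have h2 : (∫ v in V_R..V_F, gaux b V_R V_F N v)
        = ∫ v in Set.Ioc V_R V_F, gaux b V_R V_F N v := intervalIntegral.integral_of_le hV.le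
    have h3 : (∫ v in Set.Ioc V_R V_F, gaux b V_R V_F N v)
        ≤ ∫ v in Set.Iic V_F, gaux b V_R V_F N v := by
      apply setIntegral_mono_set (hgint N hN)
      · have hae : ∀ᵐ v ∂(volume.restrict (Set.Iic V_F)), 0 ≤ gaux b V_R V_F N v :=
          (ae_restrict_iff' measurableSet_Iic).2 (ae_of_all _ fun v hv => (hg0 N hN v hv).1)
        exact hae
      · exact HasSubset.Subset.eventuallyLE Set.Ioc_subset_Iic_self
    rw [h2] at h1
    linarith
  -- Lipschitz for gaux in N
  have hglip : ∀ v : ℝ, v ≤ V_F → ∀ N ∈ Set.Icc lo hi, ∀ N' ∈ Set.Icc lo hi,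
      |gaux b V_R V_F N v - gaux b V_R V_F N' v| ≤ φ v * |N - N'| := by
    intro v hv N hN N' hN'
    have h := Convex.norm_image_sub_le_of_norm_hasDerivWithin_le
      (f := fun N => gaux b V_R V_F N v) (f' := fun N => Daux b V_R V_F N v) (s := Set.Icc lo hi)
      (fun x hx => (hasDerivAt_gaux b V_R V_F v x).hasDerivWithinAt)
      (fun x hx => by rw [Real.norm_eq_abs]; exact hDphi x hx v hv)
      (convex_Icc lo hi) hN' hN
    rw [Real.norm_eq_abs, Real.norm_eq_abs] at h
    exact h
  -- Lipschitz for Ifun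
  obtain ⟨LI, hLIdef, hLI0⟩ : ∃ L, L = (∫ v in Set.Iic V_F, φ v) ∧ 0 ≤ L :=
    ⟨_, rfl, integral_nonneg fun v => hφ0 v⟩
  have hIlip : ∀ N ∈ Set.Icc lo hi, ∀ N' ∈ Set.Icc lo hi,
      |Ifun b V_R V_F N - Ifun b V_R V_F N'| ≤ LI * |N - N'| := by
    intro N hN N' hN'
    rw [Ifun_eq, Ifun_eq, ← integral_sub (hgint N hN) (hgint N' hN')]
    have h1 := norm_integral_le_of_norm_le (μ := volume.restrict (Set.Iic V_F))
      (f := fun v => gaux b V_R V_F N v - gaux b V_R V_F N' v)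
      (g := fun v => φ v * |N - N'|)
      (hφint.mul_const _)
      ((ae_restrict_iff' measurableSet_Iic).2 (ae_of_all _ fun v hv => by
        rw [Real.norm_eq_abs]; exact hglip v hv N hN N' hN'))
    rw [Real.norm_eq_abs, integral_mul_const] at h1
    rw [hLIdef]
    exact h1
  -- continuity of Ifun
  have hIcont : ContinuousOn (Ifun b V_R V_F) (Set.Icc lo hi) := by
    apply LipschitzOnWith.continuousOn (K := LI.toNNReal)
    apply LipschitzOnWith.of_dist_le_mul
    intro x hx y hy
    rw [Real.dist_eq, Real.dist_eq]
    calc |Ifun b V_R V_F x - Ifun b V_R V_F y| ≤ LI * |x - y| := hIlip x hx y hy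
      _ ≤ ↑LI.toNNReal * |x - y| :=
          mul_le_mul_of_nonneg_right (Real.le_coe_toNNReal LI) (abs_nonneg _)
  -- minimum of Ifun on K
  obtain ⟨N₀, hN₀K, hmin⟩ := isCompact_Icc.exists_isMinOn (Set.nonempty_Icc.2 hlh) hIcont
  obtain ⟨δ, hδdef, hδ⟩ : ∃ d, d = Ifun b V_R V_F N₀ ∧ 0 < d := ⟨_, rfl, hIpos N₀ hN₀K⟩
  have hδle : ∀ N ∈ Set.Icc lo hi, δ ≤ Ifun b V_R V_F N := fun N hN => hδdef ▸ isMinOn_iff.1 hmin N hN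
  -- conclusion
  refine ⟨Cφ / δ + C1 * LI / (δ * δ) + 1, ?_, hIpos, hIcont, ?_⟩
  · have e1 : 0 ≤ Cφ / δ := div_nonneg hCφ0 hδ.le
    have e2 : 0 ≤ C1 * LI / (δ * δ) :=
      div_nonneg (mul_nonneg hC1pos.le hLI0) (mul_nonneg hδ.le hδ.le)
    linarith
  intro N hN N' hN' v hv
  rw [pseudoEq_eq, pseudoEq_eq]
  have hIN := hIpos N hN
  have hIN' := hIpos N' hN'
  have e1 : 1 / Ifun b V_R V_F N * gaux b V_R V_F N v
      - 1 / Ifun b V_R V_F N' * gaux b V_R V_F N' v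
      = (1 / Ifun b V_R V_F N) * (gaux b V_R V_F N v - gaux b V_R V_F N' v)
        + gaux b V_R V_F N' v * (1 / Ifun b V_R V_F N - 1 / Ifun b V_R V_F N') := by ring
  rw [e1]
  refine (abs_add_le _ _).trans ?_
  rw [abs_mul, abs_mul]
  have b1 : |1 / Ifun b V_R V_F N| ≤ 1 / δ := by
    rw [abs_of_pos (by positivity)]
    exact one_div_le_one_div_of_le hδ (hδle N hN)
  have b2 : |gaux b V_R V_F N v - gaux b V_R V_F N' v| ≤ Cφ * |N - N'| := by
    refine (hglip v hv N hN N' hN').trans (mul_le_mul_of_nonneg_right ?_ (abs_nonneg _))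
    calc φ v ≤ Cφ * Real.exp (-(4:ℝ)⁻¹ * v ^ 2) := hφCφ v
      _ ≤ Cφ * 1 := mul_le_mul_of_nonneg_left
          (Real.exp_le_one_iff.2 (by nlinarith [sq_nonneg v])) hCφ0
      _ = Cφ := mul_one _
  have b3 : |gaux b V_R V_F N' v| ≤ C1 := by
    rw [abs_of_nonneg (hg0 N' hN' v hv).1]
    exact (hg0 N' hN' v hv).2
  have b4 : |1 / Ifun b V_R V_F N - 1 / Ifun b V_R V_F N'| ≤ LI * |N - N'| / (δ * δ) := by
    rw [div_sub_div _ _ (ne_of_gt hIN) (ne_of_gt hIN'), abs_div, one_mul, mul_one]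
    apply div_le_div₀ (mul_nonneg hLI0 (abs_nonneg _)) _ (mul_pos hδ hδ) _
    · rw [abs_sub_comm]
      exact hIlip N hN N' hN'
    · rw [abs_mul, abs_of_pos hIN, abs_of_pos hIN']
      exact mul_le_mul (hδle N hN) (hδle N' hN') hδ.le hIN.le
  refine le_trans (add_le_add
    (mul_le_mul b1 b2 (abs_nonneg _) (one_div_pos.2 hδ).le)
    (mul_le_mul b3 b4 (abs_nonneg _) hC1pos.le)) ?_
  have e2 : 1 / δ * (Cφ * |N - N'|) + C1 * (LI * |N - N'| / (δ * δ))
      = (Cφ / δ + C1 * LI / (δ * δ)) * |N - N'| := by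
    field_simp
  rw [e2]
  nlinarith [abs_nonneg (N - N')]

/-- Theorem 2.11: for a firing rate sequence whose odd subsequence converges to `N⁻ > 0`
and whose even subsequence converges to `N⁺ > 0` (so that `1/I(N⁻) = N⁺` and
`1/I(N⁺) = N⁻`), the associated pseudo-equilibria `p_{k,∞} = h(·, N_{k−1,∞})` satisfy the
eventual sup-norm estimates of the statement, and the even- (resp. odd-) indexed
pseudo-equilibria converge uniformly on `(−∞, V_F]` to `h(·,N⁻)` (resp. `h(·,N⁺)`). -/
theorem pseudoEq_two_cycle (b V_R V_F : ℝ) (hV : V_R < V_F)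
    (Nseq : ℕ → ℝ) (h0 : 0 ≤ Nseq 0)
    (hrec : ∀ k : ℕ, Nseq (k + 1) = 1 / Ifun b V_R V_F (Nseq k))
    (Nminus Nplus : ℝ) (hm : 0 < Nminus) (hp : 0 < Nplus)
    (hodd : Tendsto (fun k => Nseq (2 * k + 1)) atTop (nhds Nminus))
    (heven : Tendsto (fun k => Nseq (2 * k)) atTop (nhds Nplus)) :
    1 / Ifun b V_R V_F Nminus = Nplus ∧
    1 / Ifun b V_R V_F Nplus = Nminus ∧
    (∃ Cm : ℝ, 0 < Cm ∧ ∃ Cp : ℝ, 0 < Cp ∧ ∃ k₀ : ℕ, ∀ k : ℕ, k₀ ≤ k →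
      (∀ v : ℝ, v ≤ V_F →
        |pseudoEq b V_R V_F (Nseq (2 * k + 3)) v - pseudoEq b V_R V_F (Nseq (2 * k + 1)) v|
          ≤ Cm * |Nseq (2 * k + 3) - Nseq (2 * k + 1)|) ∧
      (∀ v : ℝ, v ≤ V_F →
        |pseudoEq b V_R V_F (Nseq (2 * k + 2)) v - pseudoEq b V_R V_F (Nseq (2 * k)) v|
          ≤ Cp * |Nseq (2 * k + 2) - Nseq (2 * k)|) ∧
      (∀ v : ℝ, v ≤ V_F →
        |pseudoEq b V_R V_F (Nseq (2 * k + 1)) v - pseudoEq b V_R V_F Nminus v|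
          ≤ Cm * |Nseq (2 * k + 1) - Nminus|) ∧
      (∀ v : ℝ, v ≤ V_F →
        |pseudoEq b V_R V_F (Nseq (2 * k)) v - pseudoEq b V_R V_F Nplus v|
          ≤ Cp * |Nseq (2 * k) - Nplus|)) ∧
    TendstoUniformlyOn (fun k => pseudoEq b V_R V_F (Nseq (2 * k + 1)))
      (pseudoEq b V_R V_F Nminus) atTop (Set.Iic V_F) ∧
    TendstoUniformlyOn (fun k => pseudoEq b V_R V_F (Nseq (2 * k)))
      (pseudoEq b V_R V_F Nplus) atTop (Set.Iic V_F) := by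
  obtain ⟨C, hC, hIpos, hIcont, hpeLip⟩ :=
    master b V_R V_F (min Nminus Nplus - 1) (max Nminus Nplus + 1) hV
      (by have := min_le_max (a := Nminus) (b := Nplus); linarith)
  have hmlo : min Nminus Nplus - 1 < Nminus := by
    have := min_le_left Nminus Nplus; linarith
  have hmhi : Nminus < max Nminus Nplus + 1 := by
    have := le_max_left Nminus Nplus; linarith
  have hplo : min Nminus Nplus - 1 < Nplus := by
    have := min_le_right Nminus Nplus; linarith
  have hphi : Nplus < max Nminus Nplus + 1 := by
    have := le_max_right Nminus Nplus; linarith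
  have hmK : Nminus ∈ Set.Icc (min Nminus Nplus - 1) (max Nminus Nplus + 1) :=
    ⟨hmlo.le, hmhi.le⟩
  have hpK : Nplus ∈ Set.Icc (min Nminus Nplus - 1) (max Nminus Nplus + 1) :=
    ⟨hplo.le, hphi.le⟩
  have hcontm : ContinuousAt (Ifun b V_R V_F) Nminus :=
    hIcont.continuousAt (Icc_mem_nhds hmlo hmhi)
  have hcontp : ContinuousAt (Ifun b V_R V_F) Nplus :=
    hIcont.continuousAt (Icc_mem_nhds hplo hphi)
  -- first identity
  have hlim : Tendsto (fun k => 1 / Ifun b V_R V_F (Nseq (2 * k + 1))) atTop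
      (nhds (1 / Ifun b V_R V_F Nminus)) :=
    tendsto_const_nhds.div (hcontm.tendsto.comp hodd) (ne_of_gt (hIpos _ hmK))
  have h2k2' : Tendsto (fun k => 1 / Ifun b V_R V_F (Nseq (2 * k + 1))) atTop (nhds Nplus) := by
    have h := heven.comp (tendsto_add_atTop_nat 1)
    refine (Filter.Tendsto.congr ?_ h)
    intro k
    show Nseq (2 * (k + 1)) = _
    have he : 2 * (k + 1) = 2 * k + 1 + 1 := by ring
    rw [he, hrec]
  have conj1 : 1 / Ifun b V_R V_F Nminus = Nplus := tendsto_nhds_unique hlim h2k2'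
  -- second identity
  have hlim2 : Tendsto (fun k => 1 / Ifun b V_R V_F (Nseq (2 * k))) atTop
      (nhds (1 / Ifun b V_R V_F Nplus)) :=
    tendsto_const_nhds.div (hcontp.tendsto.comp heven) (ne_of_gt (hIpos _ hpK))
  have h2k1' : Tendsto (fun k => 1 / Ifun b V_R V_F (Nseq (2 * k))) atTop (nhds Nminus) :=
    Filter.Tendsto.congr (fun k => hrec (2 * k)) hodd
  have conj2 : 1 / Ifun b V_R V_F Nplus = Nminus := tendsto_nhds_unique hlim2 h2k1'
  -- eventual membership
  have hevm : ∀ᶠ k in atTop, Nseq (2 * k + 1) ∈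
      Set.Icc (min Nminus Nplus - 1) (max Nminus Nplus + 1) :=
    hodd (Icc_mem_nhds hmlo hmhi)
  have hevp : ∀ᶠ k in atTop, Nseq (2 * k) ∈
      Set.Icc (min Nminus Nplus - 1) (max Nminus Nplus + 1) :=
    heven (Icc_mem_nhds hplo hphi)
  obtain ⟨k₁, hk₁⟩ := eventually_atTop.1 hevm
  obtain ⟨k₂, hk₂⟩ := eventually_atTop.1 hevp
  refine ⟨conj1, conj2, ⟨C, hC, C, hC, max k₁ k₂, ?_⟩, ?_, ?_⟩
  · intro k hk
    have hle1 : k₁ ≤ k := le_trans (le_max_left _ _) hk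
    have hle2 : k₂ ≤ k := le_trans (le_max_right _ _) hk
    have hm1 := hk₁ k hle1
    have hm3 : Nseq (2 * k + 3) ∈
        Set.Icc (min Nminus Nplus - 1) (max Nminus Nplus + 1) := by
      have h := hk₁ (k + 1) (by omega)
      have he : 2 * (k + 1) + 1 = 2 * k + 3 := by ring
      rwa [he] at h
    have hm0 := hk₂ k hle2
    have hm2 : Nseq (2 * k + 2) ∈
        Set.Icc (min Nminus Nplus - 1) (max Nminus Nplus + 1) := by
      have h := hk₂ (k + 1) (by omega)
      have he : 2 * (k + 1) = 2 * k + 2 := by ring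
      rwa [he] at h
    exact ⟨fun v hv => hpeLip _ hm3 _ hm1 v hv,
      fun v hv => hpeLip _ hm2 _ hm0 v hv,
      fun v hv => hpeLip _ hm1 _ hmK v hv,
      fun v hv => hpeLip _ hm0 _ hpK v hv⟩
  · rw [Metric.tendstoUniformlyOn_iff]
    intro ε hε
    have hεc : 0 < ε / (C + 1) := div_pos hε (by linarith)
    have hev2 : ∀ᶠ k in atTop, |Nseq (2 * k + 1) - Nminus| < ε / (C + 1) := by
      have h := Metric.tendsto_nhds.1 hodd (ε / (C + 1)) hεc
      simpa [Real.dist_eq] using h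
    filter_upwards [hev2, hevm] with k h1 h2
    intro v hv
    rw [Set.mem_Iic] at hv
    rw [Real.dist_eq, abs_sub_comm]
    calc |pseudoEq b V_R V_F (Nseq (2 * k + 1)) v - pseudoEq b V_R V_F Nminus v|
        ≤ C * |Nseq (2 * k + 1) - Nminus| := hpeLip _ h2 _ hmK v hv
      _ ≤ C * (ε / (C + 1)) := mul_le_mul_of_nonneg_left h1.le hC.le
      _ < (C + 1) * (ε / (C + 1)) := mul_lt_mul_of_pos_right (lt_add_one C) hεc
      _ = ε := by field_simp
  · rw [Metric.tendstoUniformlyOn_iff]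
    intro ε hε
    have hεc : 0 < ε / (C + 1) := div_pos hε (by linarith)
    have hev2 : ∀ᶠ k in atTop, |Nseq (2 * k) - Nplus| < ε / (C + 1) := by
      have h := Metric.tendsto_nhds.1 heven (ε / (C + 1)) hεc
      simpa [Real.dist_eq] using h
    filter_upwards [hev2, hevp] with k h1 h2
    intro v hv
    rw [Set.mem_Iic] at hv
    rw [Real.dist_eq, abs_sub_comm]
    calc |pseudoEq b V_R V_F (Nseq (2 * k)) v - pseudoEq b V_R V_F Nplus v|
        ≤ C * |Nseq (2 * k) - Nplus| := hpeLip _ h2 _ hpK v hv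
      _ ≤ C * (ε / (C + 1)) := mul_le_mul_of_nonneg_left h1.le hC.le
      _ < (C + 1) * (ε / (C + 1)) := mul_lt_mul_of_pos_right (lt_add_one C) hεc
      _ = ε := by field_simp
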